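/- The number of partitions of n avoiding the pattern (4,2) equals ⌈(n²+3)/4⌉ = n²/4 + (7+(−1)ⁿ)/8 for n ≥ 1, and the generating function Σ_{n≥0} |Av_n((4,2))| zⁿ equals (1 − z + z³)/((1−z)²(1−z²)). -/

import Mathlib

set_option linter.unusedSectionVars false
set_option linter.unusedVariables false


/-- A partition is a weakly decreasing, eventually-zero sequence `ℕ → ℕ` of row lengths. -/
def IsPartitionFun (α : ℕ → ℕ) : Prop :=
  Antitone α ∧ ∃ N, ∀ n ≥ N, α n = 0

/-- `α` contains the pattern `μ`: some rows of `α` may be selected (in order) and some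
set `C` of columns deleted so that the resulting left-justified board is exactly `μ`. -/
def Contains (α μ : ℕ → ℕ) : Prop :=
  ∃ (f : ℕ → ℕ) (C : Finset ℕ), StrictMono f ∧
    ∀ i, μ i = (Finset.range (α (f i)) \ C).card

/-- The pattern `(4,2)`. -/
def patFourTwo : ℕ → ℕ := fun i => if i = 0 then 4 else if i = 1 then 2 else 0

/-- The number of partitions of `n` avoiding the pattern `(4,2)`. -/
noncomputable def avFourTwo (n : ℕ) : ℕ :=
  Set.ncard {α : ℕ → ℕ | IsPartitionFun α ∧ (∑ᶠ i, α i) = n ∧ ¬ Contains α patFourTwo}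

namespace Stmt17Aux

/-- Containment of (4,2) characterized arithmetically. -/
theorem contains_iff {α : ℕ → ℕ} (hα : Antitone α) {N : ℕ} (hN : ∀ n ≥ N, α n = 0) :
    Contains α patFourTwo ↔ ∃ i j, i < j ∧ 2 ≤ α j ∧ α j + 2 ≤ α i := by
  constructor
  · rintro ⟨f, C, hf, hμ⟩
    refine ⟨f 0, f 1, hf (by norm_num), ?_, ?_⟩
    · have h1 := hμ 1
      simp only [patFourTwo] at h1
      norm_num at h1
      have : (Finset.range (α (f 1)) \ C).card ≤ (Finset.range (α (f 1))).card :=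
        Finset.card_le_card (Finset.sdiff_subset)
      rw [Finset.card_range] at this
      omega
    · have h0 := hμ 0
      have h1 := hμ 1
      simp only [patFourTwo] at h0 h1
      norm_num at h0 h1
      have hle : α (f 1) ≤ α (f 0) := hα (le_of_lt (hf (by norm_num)))
      set S := Finset.range (α (f 0)) \ C with hS
      have hinter : S ∩ Finset.range (α (f 1)) = Finset.range (α (f 1)) \ C := by
        ext x
        simp only [hS, Finset.mem_inter, Finset.mem_sdiff, Finset.mem_range]
        constructor
        · rintro ⟨⟨_, h⟩, h2⟩; exact ⟨h2, h⟩
        · rintro ⟨h2, h⟩; exact ⟨⟨lt_of_lt_of_le h2 hle, h⟩, h2⟩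
      have hcard : (S ∩ Finset.range (α (f 1))).card + (S \ Finset.range (α (f 1))).card
          = S.card := Finset.card_inter_add_card_sdiff _ _
      rw [hinter, ← h1, ← h0] at hcard
      have hsub : S \ Finset.range (α (f 1)) ⊆ Finset.Ico (α (f 1)) (α (f 0)) := by
        intro x hx
        simp only [hS, Finset.mem_sdiff, Finset.mem_range] at hx
        simp only [Finset.mem_Ico]
        omega
      have := Finset.card_le_card hsub
      rw [Nat.card_Ico] at this
      omega
  · rintro ⟨i, j, hij, h2, h4⟩
    set K : Finset ℕ := {0, 1, α j, α j + 1} with hK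
    refine ⟨fun t => if t = 0 then i else if t = 1 then j else j + N + t,
      Finset.range (α i) \ K, ?_, ?_⟩
    · intro a b hab
      simp only
      split_ifs <;> omega
    · intro t
      have hKsub : K ⊆ Finset.range (α i) := by
        intro x hx
        simp only [hK, Finset.mem_insert, Finset.mem_singleton] at hx
        simp only [Finset.mem_range]
        omega
      match t with
      | 0 =>
        simp only [patFourTwo, if_pos rfl]
        norm_num
        rw [Finset.inter_eq_right.mpr hKsub]
        have : K.card = 4 := by
          rw [hK]
          rw [Finset.card_insert_of_notMem (by simp; omega),
            Finset.card_insert_of_notMem (by simp; omega),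
            Finset.card_insert_of_notMem (by simp), Finset.card_singleton]
        omega
      | 1 =>
        simp only [patFourTwo]
        norm_num
        have : Finset.range (α j) \ (Finset.range (α i) \ K) = ({0, 1} : Finset ℕ) := by
          ext x
          simp only [Finset.mem_sdiff, Finset.mem_range, hK, Finset.mem_insert,
            Finset.mem_singleton, not_and, not_not]
          constructor
          · rintro ⟨hx, h⟩
            have := h (by omega)
            omega
          · rintro (rfl | rfl) <;> constructor <;> intros <;> omega
        rw [this]
        decide
      | (t+2) =>
        simp only [patFourTwo]
        norm_num
        rw [if_neg (by omega), if_neg (by omega)]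
        have hz : α (j + N + (t+2)) = 0 := hN _ (by omega)
        rw [hz]
        simp

/-! ### The canonical avoiding partition attached to a pair of parameters -/

def stepFn (m a k r : ℕ) : ℕ → ℕ := fun i =>
  if i < a then m + 1 else if i < k then m else if i < r then 1 else 0

lemma sum_range_ite_lt (v c R : ℕ) :
    ∑ i ∈ Finset.range R, (if i < c then v else 0) = min c R * v := by
  induction R with
  | zero => simp
  | succ R ih =>
    rw [Finset.sum_range_succ, ih]
    rcases Nat.lt_or_ge R c with h | h
    · rw [if_pos h]
      have h1 : min c (R+1) = R+1 := by omega
      have h2 : min c R = R := by omega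
      rw [h1, h2]; ring
    · rw [if_neg (by omega)]
      have h1 : min c (R+1) = c := by omega
      have h2 : min c R = c := by omega
      rw [h1, h2, Nat.add_zero]

section Step
variable {m a k r : ℕ} (H1 : a ≤ k) (H2 : k ≤ r) (H4 : 1 ≤ k → 2 ≤ m)
include H1 H2 H4

lemma stepFn_antitone : Antitone (stepFn m a k r) := by
  intro i j hij
  simp only [stepFn]
  split_ifs <;> omega

lemma stepFn_eq_zero {i : ℕ} (h : r ≤ i) : stepFn m a k r i = 0 := by
  simp only [stepFn]
  split_ifs <;> omega

lemma stepFn_two_le_iff (i : ℕ) : 2 ≤ stepFn m a k r i ↔ i < k := by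
  simp only [stepFn]
  split_ifs <;> omega

lemma stepFn_one_le_iff (i : ℕ) : 1 ≤ stepFn m a k r i ↔ i < r := by
  simp only [stepFn]
  split_ifs <;> omega

lemma stepFn_decomp (i : ℕ) : stepFn m a k r i =
    (if i < a then 1 else 0) + (if i < k then m - 1 else 0) + (if i < r then 1 else 0) := by
  simp only [stepFn]
  split_ifs <;> omega

lemma stepFn_sum (R : ℕ) : ∑ i ∈ Finset.range R, stepFn m a k r i
    = min a R + min k R * (m - 1) + min r R := by
  calc ∑ i ∈ Finset.range R, stepFn m a k r i
      = ∑ i ∈ Finset.range R, ((if i < a then 1 else 0)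
        + (if i < k then m - 1 else 0) + (if i < r then 1 else 0)) :=
        Finset.sum_congr rfl fun i _ => stepFn_decomp H1 H2 H4 i
    _ = _ := by
        rw [Finset.sum_add_distrib, Finset.sum_add_distrib,
          sum_range_ite_lt, sum_range_ite_lt, sum_range_ite_lt]
        ring

end Step

lemma stepFn_avoid {m a k r : ℕ} {i j : ℕ} (hij : i < j) (h2 : 2 ≤ stepFn m a k r j) :
    stepFn m a k r i < stepFn m a k r j + 2 := by
  simp only [stepFn] at *
  split_ifs at * <;> omega

def psi (n : ℕ) (p : ℕ × ℕ) : ℕ → ℕ :=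
  stepFn (p.2 / p.1) (p.2 % p.1) p.1 (p.1 + (n - p.2))

def Valid (n : ℕ) (p : ℕ × ℕ) : Prop :=
  (p.1 = 0 ∧ p.2 = 0) ∨ (1 ≤ p.1 ∧ 2 * p.1 ≤ p.2 ∧ p.2 ≤ n)

variable {n : ℕ} {p : ℕ × ℕ}

lemma valid_H1 (h : Valid n p) : p.2 % p.1 ≤ p.1 := by
  rcases h with ⟨h1, h2⟩ | ⟨h1, h2, h3⟩
  · simp [h1, h2]
  · exact le_of_lt (Nat.mod_lt _ (by omega))

lemma valid_H2 : p.1 ≤ p.1 + (n - p.2) := Nat.le_add_right _ _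

lemma valid_H4 (h : Valid n p) : 1 ≤ p.1 → 2 ≤ p.2 / p.1 := by
  intro hk
  rcases h with ⟨h1, h2⟩ | ⟨h1, h2, h3⟩
  · omega
  · exact (Nat.le_div_iff_mul_le (by omega)).mpr (by omega)

lemma valid_t_le (h : Valid n p) : p.2 ≤ n := by
  rcases h with ⟨h1, h2⟩ | ⟨h1, h2, h3⟩ <;> omega

lemma psi_antitone (h : Valid n p) : Antitone (psi n p) :=
  stepFn_antitone (valid_H1 h) valid_H2 (valid_H4 h)

lemma psi_eq_zero (h : Valid n p) {i : ℕ} (hi : p.1 + (n - p.2) ≤ i) : psi n p i = 0 :=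
  stepFn_eq_zero (valid_H1 h) valid_H2 (valid_H4 h) hi

lemma psi_partition (h : Valid n p) : IsPartitionFun (psi n p) :=
  ⟨psi_antitone h, ⟨p.1 + (n - p.2), fun _ hi => psi_eq_zero h hi⟩⟩

lemma km_eq (h : Valid n p) :
    p.1 * (p.2 / p.1 - 1) + p.1 = p.1 * (p.2 / p.1) ∨ (p.1 = 0 ∧ p.2 = 0) := by
  rcases h with ⟨h1, h2⟩ | ⟨h1, h2, h3⟩
  · right; exact ⟨h1, h2⟩
  · left
    have hm := valid_H4 (Or.inr ⟨h1, h2, h3⟩) h1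
    have e : p.2 / p.1 - 1 + 1 = p.2 / p.1 := by omega
    calc p.1 * (p.2 / p.1 - 1) + p.1 = p.1 * (p.2 / p.1 - 1 + 1) := by ring
      _ = _ := by rw [e]

lemma psi_finsum (h : Valid n p) : ∑ᶠ i, psi n p i = n := by
  have hz := fun (i : ℕ) (hi : p.1 + (n - p.2) ≤ i) => psi_eq_zero h hi
  have hsupp : ∑ᶠ i, psi n p i = ∑ i ∈ Finset.range (p.1 + (n - p.2)), psi n p i := by
    apply finsum_eq_sum_of_support_subset
    intro x hx
    simp only [Function.mem_support] at hx
    simp only [Finset.coe_range, Set.mem_Iio]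
    by_contra hc
    exact hx (hz x (by omega))
  rw [hsupp]
  have hs := stepFn_sum (valid_H1 h) (valid_H2 (n := n)) (valid_H4 h) (p.1 + (n - p.2))
  rw [psi, hs]
  have hH1 := valid_H1 h
  have hdm := Nat.div_add_mod p.2 p.1
  have htn := valid_t_le h
  rw [min_self, Nat.min_eq_left (le_trans hH1 (valid_H2 (n := n))),
    Nat.min_eq_left (valid_H2 (n := n))]
  rcases km_eq h with he | ⟨h1, h2⟩
  · omega
  · simp [h1, h2]

lemma psi_head_sum (h : Valid n p) : ∑ i ∈ Finset.range p.1, psi n p i = p.2 := by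
  have hs := stepFn_sum (valid_H1 h) (valid_H2 (n := n)) (valid_H4 h) p.1
  rw [psi, hs]
  have hH1 := valid_H1 h
  have hdm := Nat.div_add_mod p.2 p.1
  rw [min_self, Nat.min_eq_left hH1, Nat.min_eq_right (valid_H2 (n := n))]
  rcases km_eq h with he | ⟨h1, h2⟩
  · omega
  · simp [h1, h2]

lemma psi_two_le_iff (h : Valid n p) (i : ℕ) : 2 ≤ psi n p i ↔ i < p.1 :=
  stepFn_two_le_iff (valid_H1 h) valid_H2 (valid_H4 h) i

lemma psi_one_le_iff (h : Valid n p) (i : ℕ) : 1 ≤ psi n p i ↔ i < p.1 + (n - p.2) :=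
  stepFn_one_le_iff (valid_H1 h) valid_H2 (valid_H4 h) i

lemma psi_avoid (h : Valid n p) {i j : ℕ} (hij : i < j) (h2 : 2 ≤ psi n p j) :
    psi n p i < psi n p j + 2 :=
  stepFn_avoid hij h2

/-! ### Surjectivity: every avoiding partition is of this canonical form -/

lemma surj {n : ℕ} {α : ℕ → ℕ} (hmono : Antitone α) {N : ℕ} (hN : ∀ i ≥ N, α i = 0)
    (hsum : ∑ᶠ i, α i = n)
    (havoid : ∀ i j, i < j → 2 ≤ α j → α i < α j + 2) :
    ∃ p, Valid n p ∧ psi n p = α := by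
  have hex1 : ∃ i, α i ≤ 1 := ⟨N, by rw [hN N le_rfl]; omega⟩
  set k := Nat.find hex1 with hk
  have hk1 : α k ≤ 1 := Nat.find_spec hex1
  have hklt : ∀ i, i < k → 2 ≤ α i := fun i hi => by
    have := Nat.find_min hex1 hi; omega
  have hkiff : ∀ i, 2 ≤ α i ↔ i < k := by
    intro i
    constructor
    · intro h2; by_contra hc; have := hmono (le_of_not_gt hc : k ≤ i); omega
    · exact hklt i
  have hex0 : ∃ i, α i = 0 := ⟨N, hN N le_rfl⟩
  set r := Nat.find hex0 with hr
  have hr0 : α r = 0 := Nat.find_spec hex0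
  have hriff : ∀ i, 1 ≤ α i ↔ i < r := by
    intro i
    constructor
    · intro h1; by_contra hc; have := hmono (le_of_not_gt hc : r ≤ i); omega
    · intro hi; have := Nat.find_min hex0 hi; omega
  have hkr : k ≤ r := by
    by_contra hc
    have := hklt r (by omega); omega
  have hsum' : ∑ i ∈ Finset.range r, α i = n := by
    rw [← hsum]; symm
    apply finsum_eq_sum_of_support_subset
    intro x hx
    simp only [Function.mem_support] at hx
    simp only [Finset.coe_range, Set.mem_Iio]
    exact (hriff x).mp (Nat.one_le_iff_ne_zero.mpr hx)
  set t := ∑ i ∈ Finset.range k, α i with ht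
  rcases Nat.eq_zero_or_pos k with hk0 | hkpos
  · -- all rows have length ≤ 1
    have hrn : r = n := by
      have hall : ∀ i ∈ Finset.range r, α i = 1 := by
        intro i hi
        have h1 := (hriff i).mpr (Finset.mem_range.mp hi)
        have h2 := hkiff i
        omega
      have := Finset.sum_congr rfl hall
      rw [hsum'] at this
      simp at this
      omega
    refine ⟨(0, 0), Or.inl ⟨rfl, rfl⟩, ?_⟩
    funext i
    show stepFn (0 / 0) (0 % 0) 0 (0 + (n - 0)) i = α i
    simp only [stepFn, Nat.zero_div, Nat.zero_mod, Nat.zero_add, Nat.sub_zero]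
    have h1 := hriff i
    have h2 := hkiff i
    split_ifs <;> omega
  · -- the general case
    set m := α (k - 1) with hm
    have hm2 : 2 ≤ m := hklt (k - 1) (by omega)
    have hbound : ∀ i, i < k → α i = m ∨ α i = m + 1 := by
      intro i hi
      have hge : m ≤ α i := hmono (by omega)
      rcases Nat.eq_or_lt_of_le (show i ≤ k - 1 by omega) with he | hl
      · left; rw [he]
      · have := havoid i (k - 1) (by omega) hm2
        omega
    have hexa : ∃ i, α i ≤ m := ⟨k - 1, hm.ge⟩
    set a := Nat.find hexa with ha
    have ha1 : α a ≤ m := Nat.find_spec hexa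
    have hak : a ≤ k - 1 := Nat.find_min' hexa hm.ge
    have haiff : ∀ i, i < k → (α i = m + 1 ↔ i < a) := by
      intro i hik
      constructor
      · intro he; by_contra hc; have := hmono (le_of_not_gt hc : a ≤ i); omega
      · intro hia; have := Nat.find_min hexa hia; have := hbound i hik; omega
    have htval : t = k * m + a := by
      have hcong : ∀ i ∈ Finset.range k, α i = m + (if i < a then 1 else 0) := by
        intro i hi
        simp only [Finset.mem_range] at hi
        have h1 := hbound i hi
        have h2 := haiff i hi
        split_ifs <;> omega
      rw [ht, Finset.sum_congr rfl hcong, Finset.sum_add_distrib, Finset.sum_const,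
        Finset.card_range, sum_range_ite_lt]
      have hmin : min a k = a := by omega
      rw [hmin, smul_eq_mul, mul_one]
    have hta : a < k := by omega
    have htk : 2 * k ≤ t := by
      have h2k : k * 2 ≤ k * m := Nat.mul_le_mul_left k hm2
      omega
    have htn : t ≤ n := by
      rw [← hsum', ht]
      exact Finset.sum_le_sum_of_subset (Finset.range_subset_range.mpr hkr)
    have hdiv : t / k = m := by
      rw [htval, Nat.mul_add_div hkpos, Nat.div_eq_of_lt hta, Nat.add_zero]
    have hmod : t % k = a := by
      rw [htval, Nat.mul_add_mod, Nat.mod_eq_of_lt hta]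
    have hrr : r = k + (n - t) := by
      have hsplit : ∑ i ∈ Finset.range r, α i
          = ∑ i ∈ Finset.range k, α i + ∑ i ∈ Finset.Ico k r, α i := by
        rw [Finset.range_eq_Ico, Finset.range_eq_Ico]
        exact (Finset.sum_Ico_consecutive α (Nat.zero_le k) hkr).symm
      have hones : ∑ i ∈ Finset.Ico k r, α i = r - k := by
        have hone : ∀ i ∈ Finset.Ico k r, α i = 1 := by
          intro i hi
          simp only [Finset.mem_Ico] at hi
          have h1 := (hriff i).mpr hi.2
          have h2 := hkiff i
          omega
        rw [Finset.sum_congr rfl hone, Finset.sum_const, Nat.card_Ico, smul_eq_mul, mul_one]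
      omega
    refine ⟨(k, t), Or.inr ⟨hkpos, htk, htn⟩, ?_⟩
    funext i
    show stepFn (t / k) (t % k) k (k + (n - t)) i = α i
    rw [hdiv, hmod]
    simp only [stepFn]
    have h1 := hriff i
    have h2 := hkiff i
    rw [← hrr]
    split_ifs with c1 c2 c3
    · exact ((haiff i (by omega)).mpr c1).symm
    · have hb := hbound i c2
      have hif := haiff i c2
      omega
    · omega
    · omega

/-! ### The parameter set and its cardinality -/

def B (n : ℕ) : Finset (ℕ × ℕ) :=
  (Finset.range (n+1) ×ˢ Finset.range (n+1)).filter
    fun p => (p.1 = 0 ∧ p.2 = 0) ∨ (1 ≤ p.1 ∧ 2 * p.1 ≤ p.2)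

lemma mem_B {n : ℕ} {p : ℕ × ℕ} : p ∈ B n ↔ Valid n p := by
  simp only [B, Finset.mem_filter, Finset.mem_product, Finset.mem_range, Valid]
  omega

lemma card_B (n : ℕ) : (B n).card = (n ^ 2 + 6) / 4 := by
  induction n with
  | zero =>
    have hB0 : B 0 = {(0, 0)} := by
      ext p
      rw [mem_B]
      simp only [Valid, Finset.mem_singleton, Prod.ext_iff]
      omega
    rw [hB0]
    rfl
  | succ n ih =>
    have hunion : B (n+1) = B n ∪ (Finset.Icc 1 ((n+1)/2)).image (fun k => (k, n+1)) := by
      ext p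
      simp only [Finset.mem_union, mem_B, Valid, Finset.mem_image, Finset.mem_Icc]
      constructor
      · rintro (⟨h1, h2⟩ | ⟨h1, h2, h3⟩)
        · exact Or.inl (Or.inl ⟨h1, h2⟩)
        · rcases Nat.lt_or_ge p.2 (n+1) with h | h
          · exact Or.inl (Or.inr ⟨h1, h2, by omega⟩)
          · right
            refine ⟨p.1, ⟨h1, by omega⟩, ?_⟩
            have he : p.2 = n + 1 := by omega
            rw [← he]
      · rintro (h | ⟨k', ⟨hk1, hk2⟩, heq⟩)
        · rcases h with ⟨h1, h2⟩ | ⟨h1, h2, h3⟩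
          · exact Or.inl ⟨h1, h2⟩
          · exact Or.inr ⟨h1, h2, by omega⟩
        · cases heq
          exact Or.inr ⟨hk1, by omega, le_refl _⟩
    have hdisj : Disjoint (B n) ((Finset.Icc 1 ((n+1)/2)).image (fun k => (k, n+1))) := by
      rw [Finset.disjoint_right]
      intro p hp hmem
      simp only [Finset.mem_image, Finset.mem_Icc] at hp
      obtain ⟨k', hk, rfl⟩ := hp
      rw [mem_B] at hmem
      simp only [Valid] at hmem
      omega
    have hinj : Function.Injective (fun k : ℕ => (k, n+1)) := fun a b h => by
      simpa using h
    rw [hunion, Finset.card_union_of_disjoint hdisj, ih,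
      Finset.card_image_of_injective _ hinj, Nat.card_Icc]
    rcases Nat.even_or_odd n with ⟨j, rfl⟩ | ⟨j, rfl⟩
    · have hsq1 : (j+j)^2 = 4*(j*j) := by ring
      have hsq2 : (j+j+1)^2 = 4*(j*j) + 4*j + 1 := by ring
      omega
    · have hsq1 : (2*j+1)^2 = 4*(j*j) + 4*j + 1 := by ring
      have hsq2 : (2*j+1+1)^2 = 4*(j*j) + 8*j + 4 := by ring
      omega

lemma psi_injOn (n : ℕ) : Set.InjOn (psi n) (B n : Set (ℕ × ℕ)) := by
  intro p hp q hq h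
  have hvp := mem_B.mp (Finset.mem_coe.mp hp)
  have hvq := mem_B.mp (Finset.mem_coe.mp hq)
  have hk : p.1 = q.1 := by
    have e1 := psi_two_le_iff hvp p.1
    have e3 := psi_two_le_iff hvp q.1
    have e2 := psi_two_le_iff hvq p.1
    have e4 := psi_two_le_iff hvq q.1
    rw [h] at e1 e3
    omega
  have ht : p.2 = q.2 := by
    have s1 := psi_head_sum hvp
    have s2 := psi_head_sum hvq
    rw [h, hk] at s1
    omega
  exact Prod.ext hk ht

lemma avFourTwo_eq (n : ℕ) : avFourTwo n = (n ^ 2 + 6) / 4 := by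
  have hset : {α : ℕ → ℕ | IsPartitionFun α ∧ (∑ᶠ i, α i) = n ∧ ¬ Contains α patFourTwo}
      = psi n '' (B n : Set (ℕ × ℕ)) := by
    ext α
    simp only [Set.mem_setOf_eq, Set.mem_image, Finset.mem_coe]
    constructor
    · rintro ⟨⟨hmono, N, hN⟩, hsum, hcont⟩
      have havoid : ∀ i j, i < j → 2 ≤ α j → α i < α j + 2 := by
        intro i j hij h2
        by_contra hc
        exact hcont ((contains_iff hmono hN).mpr ⟨i, j, hij, h2, by omega⟩)
      obtain ⟨p, hp, hpsi⟩ := surj hmono hN hsum havoid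
      exact ⟨p, mem_B.mpr hp, hpsi⟩
    · rintro ⟨p, hp, rfl⟩
      have hv := mem_B.mp hp
      refine ⟨psi_partition hv, psi_finsum hv, ?_⟩
      rw [contains_iff (psi_antitone hv) (fun i hi => psi_eq_zero hv hi)]
      rintro ⟨i, j, hij, h2, h4⟩
      have := psi_avoid hv hij h2
      omega
  rw [avFourTwo, hset, Set.ncard_image_of_injOn (psi_injOn n), Set.ncard_coe_finset, card_B]

end Stmt17Aux

/-- `|Av_n((4,2))| = ⌈(n²+3)/4⌉ = n²/4 + (7+(−1)ⁿ)/8` for `n ≥ 1`, and the generating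
function `Σ_{n≥0} |Av_n((4,2))| zⁿ` equals `(1 − z + z³)/((1−z)²(1−z²))`. -/
theorem stmt_17 :
    (∀ n : ℕ, 1 ≤ n →
        avFourTwo n = (n ^ 2 + 3 + 3) / 4 ∧
        (avFourTwo n : ℝ) = (n : ℝ) ^ 2 / 4 + (7 + (-1 : ℝ) ^ n) / 8) ∧
      (PowerSeries.mk fun n => (avFourTwo n : ℚ)) *
          ((1 - PowerSeries.X) ^ 2 * (1 - PowerSeries.X ^ 2))
        = 1 - PowerSeries.X + PowerSeries.X ^ 3 := by
  have key := Stmt17Aux.avFourTwo_eq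
  constructor
  · intro n hn
    constructor
    · rw [key n]
    · rw [key n]
      rcases Nat.even_or_odd n with ⟨m, rfl⟩ | ⟨m, rfl⟩
      · have h1 : ((m + m) ^ 2 + 6) / 4 = m ^ 2 + 1 := by
          have hsq : (m + m) ^ 2 = 4 * m ^ 2 := by ring
          omega
        rw [h1]
        have h2 : (-1 : ℝ) ^ (m + m) = 1 := Even.neg_one_pow ⟨m, rfl⟩
        rw [h2]
        push_cast
        ring
      · have h1 : ((2 * m + 1) ^ 2 + 6) / 4 = m ^ 2 + m + 1 := by
          have hsq : (2 * m + 1) ^ 2 = 4 * m ^ 2 + 4 * m + 1 := by ring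
          omega
        rw [h1]
        have h2 : (-1 : ℝ) ^ (2 * m + 1) = -1 := Odd.neg_one_pow ⟨m, rfl⟩
        rw [h2]
        push_cast
        ring
  · have expand : (PowerSeries.mk fun n => (avFourTwo n : ℚ)) *
        ((1 - PowerSeries.X) ^ 2 * (1 - PowerSeries.X ^ 2))
        = (PowerSeries.mk fun n => (avFourTwo n : ℚ))
          - PowerSeries.C (R := ℚ) 2 * ((PowerSeries.mk fun n => (avFourTwo n : ℚ)) * PowerSeries.X ^ 1)
          + PowerSeries.C (R := ℚ) 2 * ((PowerSeries.mk fun n => (avFourTwo n : ℚ)) * PowerSeries.X ^ 3)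
          - (PowerSeries.mk fun n => (avFourTwo n : ℚ)) * PowerSeries.X ^ 4 := by
      rw [map_ofNat]
      ring
    rw [expand]
    apply PowerSeries.ext
    intro d
    simp only [map_sub, map_add, PowerSeries.coeff_C_mul, PowerSeries.coeff_mul_X_pow',
      PowerSeries.coeff_mk, PowerSeries.coeff_one, PowerSeries.coeff_X,
      PowerSeries.coeff_X_pow, key]
    match d with
    | 0 => norm_num
    | 1 => norm_num
    | 2 => norm_num
    | 3 => norm_num
    | (d+4) =>
      rw [if_pos (by omega), if_pos (by omega), if_pos (by omega),
        if_neg (by omega), if_neg (by omega), if_neg (by omega)]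
      have e1 : d + 4 - 1 = d + 3 := by omega
      have e2 : d + 4 - 3 = d + 1 := by omega
      have e3 : d + 4 - 4 = d := by omega
      rw [e1, e2, e3]
      have hnat : ((d+4)^2 + 6)/4 + 2 * (((d+1)^2 + 6)/4)
          = 2 * (((d+3)^2 + 6)/4) + ((d^2 + 6)/4) := by
        have q1 : (d+4)^2 = d^2 + 8*d + 16 := by ring
        have q2 : (d+3)^2 = d^2 + 6*d + 9 := by ring
        have q3 : (d+1)^2 = d^2 + 2*d + 1 := by ring
        omega
      have hq := congrArg (fun x : ℕ => (x : ℚ)) hnat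
      push_cast at hq
      linarith
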